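/- Let y ∈ {0,1}, μ ∈ ℝ, σ > 0, and define z̄ = μ + (2y−1)σ·φ(μ/σ)/Φ((2y−1)μ/σ), where φ and Φ are the standard normal density and cumulative distribution function. Then the supremum over all μ ∈ ℝ and σ > 0 of |z̄|/(|μ|+σ) is finite; in particular |z̄|/(|μ|+σ) ≤ max{1 + φ(0)/Φ(−1), 3} for all μ, σ. -/

import Mathlib

open Real

/-- Standard normal density. -/
noncomputable def stdphi (t : ℝ) : ℝ := (Real.sqrt (2 * Real.pi))⁻¹ * Real.exp (-t ^ 2 / 2)

/-- Standard normal cumulative distribution function. -/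
noncomputable def stdPhi (x : ℝ) : ℝ := ∫ t in Set.Iic x, stdphi t

open MeasureTheory

lemma stdphi_pos (t : ℝ) : 0 < stdphi t := by
  unfold stdphi
  positivity

lemma stdphi_cont : Continuous stdphi := by
  unfold stdphi
  continuity

lemma integrable_stdphi : MeasureTheory.Integrable stdphi := by
  have h : stdphi = fun t => (Real.sqrt (2 * Real.pi))⁻¹ * Real.exp (-(1/2) * t ^ 2) := by
    funext t; unfold stdphi; ring_nf
  rw [h]
  exact (integrable_exp_neg_mul_sq (by norm_num)).const_mul _

lemma stdphi_hasDeriv (t : ℝ) : HasDerivAt (fun s => -stdphi s) (t * stdphi t) t := by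
  have h1 : HasDerivAt (fun s : ℝ => -s ^ 2 / 2) (-t) t := by
    have := ((hasDerivAt_pow 2 t).neg).div_const 2
    simpa using this.congr_deriv (by ring)
  have h2 : HasDerivAt (fun s : ℝ => Real.exp (-s ^ 2 / 2))
      (Real.exp (-t ^ 2 / 2) * (-t)) t := h1.exp
  have h3 : HasDerivAt (fun s => -((Real.sqrt (2 * Real.pi))⁻¹ * Real.exp (-s ^ 2 / 2)))
      (-((Real.sqrt (2 * Real.pi))⁻¹ * (Real.exp (-t ^ 2 / 2) * (-t)))) t :=
    (h2.const_mul ((Real.sqrt (2 * Real.pi))⁻¹)).neg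
  unfold stdphi
  convert h3 using 1
  ring

lemma integral_t_stdphi (a b : ℝ) :
    ∫ t in a..b, t * stdphi t = stdphi a - stdphi b := by
  have h := intervalIntegral.integral_eq_sub_of_hasDerivAt
    (f := fun s => -stdphi s) (f' := fun t => t * stdphi t)
    (fun t _ => stdphi_hasDeriv t)
    (Continuous.intervalIntegrable (by
      have : Continuous stdphi := by unfold stdphi; continuity
      exact continuous_id.mul this) a b)
  rw [h]; ring

lemma stdPhi_ge_interval (a b : ℝ) (hab : a ≤ b) :
    (∫ t in a..b, stdphi t) ≤ stdPhi b := by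
  rw [intervalIntegral.integral_of_le hab]
  unfold stdPhi
  apply setIntegral_mono_set integrable_stdphi.integrableOn
    (Filter.Eventually.of_forall fun t => (stdphi_pos t).le)
  exact HasSubset.Subset.eventuallyLE Set.Ioc_subset_Iic_self

lemma stdPhi_mono {a b : ℝ} (hab : a ≤ b) : stdPhi a ≤ stdPhi b := by
  unfold stdPhi
  apply setIntegral_mono_set integrable_stdphi.integrableOn
    (Filter.Eventually.of_forall fun t => (stdphi_pos t).le)
  exact HasSubset.Subset.eventuallyLE (Set.Iic_subset_Iic.mpr hab)

lemma stdPhi_pos (x : ℝ) : 0 < stdPhi x := by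
  have h1 : (0:ℝ) < ∫ t in (x-1)..x, stdphi t := by
    apply intervalIntegral.intervalIntegral_pos_of_pos_on
      (stdphi_cont.intervalIntegrable _ _) (fun t _ => stdphi_pos t) (by linarith)
  linarith [stdPhi_ge_interval (x-1) x (by linarith)]

lemma stdphi_ratio (a u : ℝ) : stdphi a = stdphi u * Real.exp ((u^2 - a^2)/2) := by
  unfold stdphi
  rw [mul_assoc, ← Real.exp_add]
  ring_nf

lemma mills_bound {u : ℝ} (hu : u ≤ -1) : stdphi u ≤ (2 * (-u) + 2) * stdPhi u := by
  have hu0 : u < 0 := by linarith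
  set a : ℝ := u + 1/u with ha
  have hinv : 1/u < 0 := div_neg_of_pos_of_neg one_pos hu0
  have hinv1 : -1 ≤ 1/u := by
    rw [le_div_iff_of_neg hu0]
    linarith
  have hau : a < u := by simp only [ha]; linarith
  have ha0 : a < 0 := by linarith
  -- step B : pointwise bound and integral comparison
  have hB : (∫ t in a..u, (t / a) * stdphi t) ≤ ∫ t in a..u, stdphi t := by
    apply intervalIntegral.integral_mono_on hau.le
    · exact ((continuous_id.div_const a).mul stdphi_cont).intervalIntegrable _ _
    · exact stdphi_cont.intervalIntegrable _ _
    · intro t ht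
      have h1 : t / a ≤ 1 := by
        rw [div_le_one_of_neg ha0]  -- may not exist
        exact ht.1
      nlinarith [stdphi_pos t, ht.1]
  have hBval : (∫ t in a..u, (t / a) * stdphi t) = (stdphi u - stdphi a) / (-a) := by
    have : (∫ t in a..u, (t / a) * stdphi t) = (1/a) * ∫ t in a..u, t * stdphi t := by
      rw [← intervalIntegral.integral_const_mul]
      congr 1; funext t; ring
    rw [this, integral_t_stdphi, div_neg, ← neg_div, neg_sub, one_div, inv_mul_eq_div]
  -- step C : stdphi a ≤ stdphi u / 2
  have hC : stdphi a ≤ stdphi u / 2 := by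
    rw [stdphi_ratio a u]
    have hexp : (u^2 - a^2)/2 ≤ -1 := by
      have : u * (1/u) = 1 := mul_one_div_cancel hu0.ne
      simp only [ha]
      nlinarith [sq_nonneg (1/u)]
    have h2 : Real.exp ((u^2 - a^2)/2) ≤ Real.exp (-1) := Real.exp_le_exp.mpr hexp
    have h3 : Real.exp (-1 : ℝ) ≤ 1/2 := by
      rw [Real.exp_neg]
      have h2e : (2:ℝ) ≤ Real.exp 1 := by
        have := Real.add_one_le_exp 1; linarith
      have h4 := inv_mul_cancel₀ (Real.exp_pos 1).ne'
      nlinarith [inv_pos.mpr (Real.exp_pos 1)]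
    nlinarith [stdphi_pos u, Real.exp_pos ((u^2 - a^2)/2)]
  -- combine
  have hPhi : (stdphi u - stdphi a) / (-a) ≤ stdPhi u :=
    le_trans (hBval ▸ hB) (stdPhi_ge_interval a u hau.le)
  have hna : 0 < -a := by linarith
  have hna2 : -a ≤ -u + 1 := by simp only [ha]; linarith
  have : stdphi u - stdphi a ≤ (-a) * stdPhi u := by
    rw [div_le_iff₀ hna] at hPhi; linarith [hPhi]
  nlinarith [stdPhi_pos u]

lemma stdphi_le_zero (t : ℝ) : stdphi t ≤ stdphi 0 := by
  unfold stdphi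
  have : Real.exp (-t^2/2) ≤ Real.exp (-(0:ℝ)^2/2) := by
    apply Real.exp_le_exp.mpr; nlinarith [sq_nonneg t]
  have h0 : (0:ℝ) ≤ (Real.sqrt (2 * Real.pi))⁻¹ := by positivity
  exact mul_le_mul_of_nonneg_left this h0

lemma stdphi_even (t : ℝ) : stdphi (-t) = stdphi t := by
  unfold stdphi; ring_nf

lemma ratio_core (u : ℝ) :
    |u + stdphi u / stdPhi u| ≤ max (1 + stdphi 0 / stdPhi (-1)) 3 * (|u| + 1) := by
  set M := max (1 + stdphi 0 / stdPhi (-1)) 3 with hM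
  have hM3 : (3:ℝ) ≤ M := le_max_right _ _
  have hM1 : (1 + stdphi 0 / stdPhi (-1)) ≤ M := le_max_left _ _
  have hlampos : 0 < stdphi u / stdPhi u := div_pos (stdphi_pos u) (stdPhi_pos u)
  have habs : -|u| ≤ u := neg_abs_le u
  have habs2 : u ≤ |u| := le_abs_self u
  have habs0 : 0 ≤ |u| := abs_nonneg u
  rw [abs_le]
  constructor
  · nlinarith
  · rcases le_or_gt (-1 : ℝ) u with h | h
    · have hφ : stdphi u / stdPhi u ≤ stdphi 0 / stdPhi (-1) := by
        apply div_le_div₀ (stdphi_pos 0).le (stdphi_le_zero u) (stdPhi_pos (-1))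
          (stdPhi_mono h)
      have hc : 0 ≤ stdphi 0 / stdPhi (-1) :=
        (div_pos (stdphi_pos 0) (stdPhi_pos (-1))).le
      nlinarith
    · have hlam : stdphi u / stdPhi u ≤ 2 * (-u) + 2 := by
        rw [div_le_iff₀ (stdPhi_pos u)]
        exact mills_bound h.le
      nlinarith

/-- For `y ∈ {0,1}`, `μ ∈ ℝ`, `σ > 0` and
`z̄ = μ + (2y−1)σ φ(μ/σ)/Φ((2y−1)μ/σ)`, the ratio `|z̄|/(|μ|+σ)` is
uniformly bounded by `max {1 + φ(0)/Φ(−1), 3}`; in particular the supremum of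
this ratio over all `μ` and `σ > 0` is finite. -/
theorem trunc_normal_mean_ratio_bounded (y μ σ : ℝ) (hy : y = 0 ∨ y = 1) (hσ : 0 < σ) :
    |μ + (2 * y - 1) * σ * stdphi (μ / σ) / stdPhi ((2 * y - 1) * μ / σ)| / (|μ| + σ)
      ≤ max (1 + stdphi 0 / stdPhi (-1)) 3 := by
  set M := max (1 + stdphi 0 / stdPhi (-1)) 3 with hM
  have hden : 0 < |μ| + σ := by positivity
  have hσ' : σ ≠ 0 := hσ.ne'
  rw [div_le_iff₀ hden]
  rcases hy with h | h <;> subst h <;> norm_num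
  · -- y = 0, s = -1 : expression μ - σ φ(μ/σ)/Φ(-μ/σ)
    rw [show -μ/σ = -(μ/σ) from by ring,
        show μ + -(σ * stdphi (μ / σ)) / stdPhi (-(μ / σ))
           = μ - σ * stdphi (μ / σ) / stdPhi (-(μ / σ)) from by ring]
    have key := ratio_core (-(μ/σ))
    have he : stdphi (μ/σ) = stdphi (-(μ/σ)) := (stdphi_even (μ/σ)).symm
    have h1 : μ - σ * stdphi (μ / σ) / stdPhi (-(μ / σ)) =
        -(σ * (-(μ/σ) + stdphi (-(μ/σ)) / stdPhi (-(μ/σ)))) := by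
      rw [← he]; field_simp; ring
    have h2 : |μ| + σ = σ * (|(-(μ/σ))| + 1) := by
      rw [abs_neg, abs_div, abs_of_pos hσ]; field_simp
    calc |μ - σ * stdphi (μ / σ) / stdPhi (-(μ / σ))|
        = σ * |(-(μ/σ)) + stdphi (-(μ/σ)) / stdPhi (-(μ/σ))| := by
          rw [h1, abs_neg, abs_mul, abs_of_pos hσ]
      _ ≤ σ * (M * ((|(-(μ/σ))| + 1))) := by
          exact mul_le_mul_of_nonneg_left key hσ.le
      _ = M * (|μ| + σ) := by rw [h2]; ring
  · -- y = 1
    have key := ratio_core (μ/σ)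
    have h1 : μ + σ * stdphi (μ / σ) / stdPhi (μ / σ) =
        σ * (μ/σ + stdphi (μ/σ) / stdPhi (μ/σ)) := by field_simp
    have h2 : |μ| + σ = σ * (|μ/σ| + 1) := by
      rw [abs_div, abs_of_pos hσ]; field_simp
    calc |μ + σ * stdphi (μ / σ) / stdPhi (μ / σ)|
        = σ * |μ/σ + stdphi (μ/σ) / stdPhi (μ/σ)| := by
          rw [h1, abs_mul, abs_of_pos hσ]
      _ ≤ σ * (M * ((|μ/σ| + 1))) := mul_le_mul_of_nonneg_left key hσ.le
      _ = M * (|μ| + σ) := by rw [h2]; ring
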